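/- Let F be a field, R, K, C finite index types, f : K → C an injective map, and M : Matrix (R ⊕ K) C F a matrix such that for every k ∈ K the row of M indexed by k is the standard basis row vector supported at column f k (i.e. M k c = 1 if c = f k and M k c = 0 otherwise). Then rank(M) = |K| + rank(M'), where M' is the submatrix of M consisting of the rows indexed by R and the columns indexed by C ∖ range f. -/

import Mathlib

open Matrix LinearMap Module

section aux

variable {F : Type*} [Field F]

/-- Rank is invariant under reindexing (rectangular version). -/
lemma aux_rank_reindex {m n m' n' : Type*} [Fintype n] [Fintype n']
    (e₁ : m ≃ m') (e₂ : n ≃ n') (A : Matrix m n F) :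
    (Matrix.reindex e₁ e₂ A).rank = A.rank := by
  rw [Matrix.rank, Matrix.rank, mulVecLin_reindex, LinearMap.range_comp, LinearMap.range_comp,
    LinearEquiv.range, Submodule.map_top, LinearEquiv.finrank_map_eq]

lemma aux_rank_submatrix {m n m' n' : Type*} [Fintype n] [Fintype n']
    (e₁ : m' ≃ m) (e₂ : n' ≃ n) (A : Matrix m n F) :
    (A.submatrix e₁ e₂).rank = A.rank := by
  simpa only [Matrix.reindex_apply, Equiv.symm_symm] using aux_rank_reindex e₁.symm e₂.symm A

/-- The obvious linear equivalence `(α ⊕ β → F) ≃ₗ[F] (α → F) × (β → F)`. -/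
def auxSumArrow (F : Type*) [Field F] (α β : Type*) : (α ⊕ β → F) ≃ₗ[F] (α → F) × (β → F) :=
  { Equiv.sumArrowEquivProdArrow α β F with
    map_add' := fun _ _ => rfl
    map_smul' := fun _ _ => rfl }

lemma aux_range_prodMap {M₁ M₂ N₁ N₂ : Type*} [AddCommGroup M₁] [AddCommGroup M₂]
    [AddCommGroup N₁] [AddCommGroup N₂] [Module F M₁] [Module F M₂] [Module F N₁] [Module F N₂]
    (f : M₁ →ₗ[F] N₁) (g : M₂ →ₗ[F] N₂) :
    LinearMap.range (f.prodMap g) = (LinearMap.range f).prod (LinearMap.range g) := by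
  ext ⟨a, b⟩
  simp only [LinearMap.mem_range, Submodule.mem_prod, Prod.ext_iff]
  constructor
  · rintro ⟨⟨x, y⟩, hx, hy⟩
    exact ⟨⟨x, hx⟩, ⟨y, hy⟩⟩
  · rintro ⟨⟨x, hx⟩, ⟨y, hy⟩⟩
    exact ⟨(x, y), hx, hy⟩

/-- The product of two submodules is linearly equivalent to the binary product. -/
def auxProdEquiv {M₁ M₂ : Type*} [AddCommGroup M₁] [AddCommGroup M₂]
    [Module F M₁] [Module F M₂] (p : Submodule F M₁) (q : Submodule F M₂) :
    ↥(p.prod q) ≃ₗ[F] ↥p × ↥q where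
  toFun x := (⟨x.1.1, x.2.1⟩, ⟨x.1.2, x.2.2⟩)
  invFun x := ⟨(x.1.1, x.2.1), ⟨x.1.2, x.2.2⟩⟩
  map_add' _ _ := rfl
  map_smul' _ _ := rfl
  left_inv _ := rfl
  right_inv _ := rfl

lemma aux_finrank_prod {M₁ M₂ : Type*} [AddCommGroup M₁] [AddCommGroup M₂]
    [Module F M₁] [Module F M₂] [Module.Finite F M₁] [Module.Finite F M₂]
    (p : Submodule F M₁) (q : Submodule F M₂) :
    finrank F ↥(p.prod q) = finrank F ↥p + finrank F ↥q := by
  rw [(auxProdEquiv p q).finrank_eq, Module.finrank_prod]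

/-- The rank of a block diagonal matrix is the sum of the ranks of the blocks. -/
lemma aux_rank_fromBlocks_diag {m n p q : Type*} [Fintype m] [Fintype n] [Fintype p] [Fintype q]
    (A : Matrix m n F) (D : Matrix p q F) :
    (Matrix.fromBlocks A 0 0 D).rank = A.rank + D.rank := by
  have h : (Matrix.fromBlocks A 0 0 D).mulVecLin =
      ((auxSumArrow F m p).symm : ((m → F) × (p → F)) →ₗ[F] (m ⊕ p → F)) ∘ₗ
        (A.mulVecLin.prodMap D.mulVecLin) ∘ₗ
          ((auxSumArrow F n q : (n ⊕ q → F) ≃ₗ[F] _) : (n ⊕ q → F) →ₗ[F] (n → F) × (q → F)) := by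
    ext x
    simp [Matrix.fromBlocks_mulVec, auxSumArrow, Equiv.sumArrowEquivProdArrow,
      Equiv.sumPiEquivProdPi]
  rw [Matrix.rank, h, LinearMap.range_comp, LinearMap.range_comp, LinearEquiv.range,
    Submodule.map_top, LinearEquiv.finrank_map_eq, aux_range_prodMap, aux_finrank_prod]
  rfl

end aux

set_option maxHeartbeats 1000000 in
/-- If the rows of `M` indexed by `K` are standard basis row vectors supported
at the (pairwise distinct) columns `f k`, then
`rank M = |K| + rank M'`, where `M'` is the submatrix of `M` given by the rows
indexed by `R` and the columns outside the range of `f`. -/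
theorem stmt3 {F : Type*} [Field F] {R K C : Type*}
    [Fintype R] [Fintype K] [Fintype C] [DecidableEq K] [DecidableEq C]
    (f : K → C) (hf : Function.Injective f)
    (M : Matrix (R ⊕ K) C F)
    (hM : ∀ (k : K) (c : C), M (Sum.inr k) c = if c = f k then 1 else 0) :
    M.rank = Fintype.card K
      + (M.submatrix Sum.inl
          (fun c : ↥((Finset.univ.image f)ᶜ) => (c : C))).rank := by
  classical
  set t : Finset C := (Finset.univ.image f)ᶜ with ht
  have hmem : ∀ c : C, c ∈ t ↔ c ∈ (Set.range f)ᶜ := by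
    intro c
    simp [ht, Set.mem_range]
  -- the column equivalence
  let e : K ⊕ ↥t ≃ C :=
    (Equiv.sumCongr (Equiv.ofInjective f hf) (Equiv.subtypeEquivRight hmem)).trans
      (Equiv.Set.sumCompl (Set.range f))
  have he_inl : ∀ k : K, e (Sum.inl k) = f k := fun k => rfl
  have he_inr : ∀ c : ↥t, e (Sum.inr c) = (c : C) := fun c => rfl
  -- the row operation matrix
  let U : Matrix (R ⊕ K) (R ⊕ K) F :=
    Matrix.fromBlocks 1 (Matrix.of fun r k => - M (Sum.inl r) (f k)) 0 1
  have hU : IsUnit U.det := by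
    rw [Matrix.det_fromBlocks_zero₂₁, Matrix.det_one, Matrix.det_one, one_mul]
    exact isUnit_one
  let B : Matrix R (↥t) F :=
    M.submatrix Sum.inl (fun c : ↥t => (c : C))
  -- the row-reduced, column-permuted matrix is a block matrix
  have key : (U * M).submatrix (Equiv.refl (R ⊕ K)) e =
      Matrix.fromBlocks (0 : Matrix R K F) B (1 : Matrix K K F) (0 : Matrix K ↥t F) := by
    ext i j
    have hUM : ∀ (i : R ⊕ K) (c : C), (U * M) i c = match i with
        | Sum.inl r => M (Sum.inl r) c - ∑ k : K, M (Sum.inl r) (f k) * M (Sum.inr k) c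
        | Sum.inr k => M (Sum.inr k) c := by
      rintro (r | k) c
      · simp only [Matrix.mul_apply, U, Fintype.sum_sum_type, Matrix.fromBlocks_apply₁₁,
          Matrix.fromBlocks_apply₁₂, Matrix.one_apply, Matrix.of_apply]
        simp [ite_mul, Finset.sum_ite_eq, sub_eq_add_neg, Finset.sum_neg_distrib, neg_mul]
      · simp only [Matrix.mul_apply, U, Fintype.sum_sum_type, Matrix.fromBlocks_apply₂₁,
          Matrix.fromBlocks_apply₂₂, Matrix.one_apply, Matrix.zero_apply]
        simp [Finset.sum_ite_eq' Finset.univ k fun k' => M (Sum.inr k') c]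
    obtain (r | k) := i <;> obtain (k' | c) := j
    · -- (inl r, inl k') : entry 0
      simp only [Matrix.submatrix_apply, Equiv.refl_apply, he_inl, hUM,
        Matrix.fromBlocks_apply₁₁, Matrix.zero_apply, hUM]
      simp only [hM, hf.eq_iff, mul_ite, mul_one, mul_zero, Finset.sum_ite_eq,
        Finset.mem_univ, if_true]
      exact sub_self _
    · -- (inl r, inr c) : entry B
      simp only [Matrix.submatrix_apply, Equiv.refl_apply, he_inr,
        Matrix.fromBlocks_apply₁₂, hUM]
      have hc : (c : C) ∉ Set.range f := (hmem c).1 c.2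
      have : ∀ k : K, M (Sum.inr k) (c : C) = 0 := by
        intro k
        rw [hM]
        rw [if_neg]
        exact fun h => hc ⟨k, h.symm⟩
      simp [this, B]
    · -- (inr k, inl k') : identity
      simp only [Matrix.submatrix_apply, Equiv.refl_apply, he_inl,
        Matrix.fromBlocks_apply₂₁, hUM]
      rw [hM]
      simp [Matrix.one_apply, hf.eq_iff, eq_comm]
    · -- (inr k, inr c) : zero
      simp only [Matrix.submatrix_apply, Equiv.refl_apply, he_inr,
        Matrix.fromBlocks_apply₂₂, Matrix.zero_apply, hUM]
      rw [hM]
      have hc : (c : C) ∉ Set.range f := (hmem c).1 c.2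
      rw [if_neg]
      exact fun h => hc ⟨k, h.symm⟩
  -- now compute ranks
  have h1 : M.rank = (U * M).rank := (Matrix.rank_mul_eq_right_of_isUnit_det U M hU).symm
  have h2 : (U * M).rank = (Matrix.fromBlocks (0 : Matrix R K F) B (1 : Matrix K K F) (0 : Matrix K ↥t F)).rank := by
    rw [← key, aux_rank_submatrix]
  have h3 : (Matrix.fromBlocks (0 : Matrix R K F) B (1 : Matrix K K F) (0 : Matrix K ↥t F)).rank =
      (Matrix.fromBlocks (1 : Matrix K K F) 0 0 B).rank := by
    rw [show Matrix.fromBlocks (1 : Matrix K K F) 0 0 B =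
        (Matrix.fromBlocks (0 : Matrix R K F) B (1 : Matrix K K F) (0 : Matrix K ↥t F)).submatrix (Equiv.sumComm K R)
          (Equiv.refl (K ⊕ ↥t)) from by
      ext (i | i) (j | j) <;> rfl]
    rw [aux_rank_submatrix]
  rw [h1, h2, h3, aux_rank_fromBlocks_diag, Matrix.rank_one]
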